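/- For all integers n ≥ 0 and k ≥ 0, the number of words in [k]^n avoiding the generalized pattern 12-3 equals the number of words in [k]^n avoiding the generalized pattern 21-3 (i.e., the patterns 12-3 and 21-3 are Wilf-equivalent). -/

import Mathlib

def letter {n k : ℕ} (w : Fin n → Fin k) (i : ℕ) : ℕ :=
  if h : i < n then (w ⟨i, h⟩ : ℕ) + 1 else 0

def Avoids12d3 {n k : ℕ} (w : Fin n → Fin k) : Prop :=
  ∀ i j : ℕ, i + 2 ≤ j → j < n →
    ¬ (letter w i < letter w (i + 1) ∧ letter w (i + 1) < letter w j)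

def Avoids21d3 {n k : ℕ} (w : Fin n → Fin k) : Prop :=
  ∀ i j : ℕ, i + 2 ≤ j → j < n →
    ¬ (letter w (i + 1) < letter w i ∧ letter w i < letter w j)

namespace Wilf

variable {n k : ℕ}

/-- The set of suffix weak maxima of a word. -/
def Wset (w : Fin n → Fin k) : Finset (Fin n) :=
  Finset.univ.filter (fun p => ∀ j, p < j → w j ≤ w p)

lemma mem_Wset {w : Fin n → Fin k} {p : Fin n} :
    p ∈ Wset w ↔ ∀ j, p < j → w j ≤ w p := by
  simp [Wset]

def rset (S : Finset (Fin n)) (q : Fin n) : Finset (Fin n) :=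
  S.filter (fun j => q < j)

def lset (S : Finset (Fin n)) (q : Fin n) : Finset (Fin n) :=
  S.filter (fun j => j < q)

/-- first element of `S` strictly after `q` (junk value `q` if none). -/
def rpos (S : Finset (Fin n)) (q : Fin n) : Fin n :=
  if h : (rset S q).Nonempty then (rset S q).min' h else q

/-- one plus the last element of `S` strictly before `q` (`0` if none). -/
def lpos (S : Finset (Fin n)) (q : Fin n) : ℕ :=
  if h : (lset S q).Nonempty then ((lset S q).max' h : ℕ) + 1 else 0

lemma lpos_le (S : Finset (Fin n)) (q : Fin n) : lpos S q ≤ (q : ℕ) := by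
  unfold lpos
  split
  · next h =>
    have hm := Finset.max'_mem _ h
    simp only [lset, Finset.mem_filter] at hm
    have : ((lset S q).max' h : ℕ) < (q : ℕ) := hm.2
    omega
  · omega

lemma rpos_mem {S : Finset (Fin n)} {q : Fin n} (h : (rset S q).Nonempty) :
    rpos S q ∈ S ∧ q < rpos S q := by
  have hm : rpos S q ∈ rset S q := by
    unfold rpos; rw [dif_pos h]; exact Finset.min'_mem _ h
  simpa [rset, Finset.mem_filter] using hm

lemma rpos_min {S : Finset (Fin n)} {q : Fin n} (h : (rset S q).Nonempty)
    {j : Fin n} (hj : j ∈ S) (hqj : q < j) : rpos S q ≤ j := by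
  unfold rpos; rw [dif_pos h]
  exact Finset.min'_le _ _ (by simp [rset, Finset.mem_filter, hj, hqj])

lemma not_mem_block {S : Finset (Fin n)} {q : Fin n} (hq : q ∉ S)
    {p : Fin n} (h1 : lpos S q ≤ (p : ℕ)) (h2 : (p : ℕ) < (rpos S q : ℕ)) :
    p ∉ S := by
  intro hp
  rcases lt_trichotomy p q with hlt | heq | hgt
  · have hne : (lset S q).Nonempty := ⟨p, by simp [lset, Finset.mem_filter, hp, hlt]⟩
    have hle : p ≤ (lset S q).max' hne :=
      Finset.le_max' _ _ (by simp [lset, Finset.mem_filter, hp, hlt])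
    unfold lpos at h1; rw [dif_pos hne] at h1
    have : (p : ℕ) ≤ ((lset S q).max' hne : ℕ) := hle
    omega
  · exact hq (heq ▸ hp)
  · have hne : (rset S q).Nonempty := ⟨p, by simp [rset, Finset.mem_filter, hp, hgt]⟩
    have := rpos_min hne hp hgt
    have : (rpos S q : ℕ) ≤ (p : ℕ) := this
    omega

lemma block_eq {S : Finset (Fin n)} {q : Fin n} (hq : q ∉ S)
    (hne : (rset S q).Nonempty) {p : Fin n}
    (h1 : lpos S q ≤ (p : ℕ)) (h2 : (p : ℕ) < (rpos S q : ℕ)) :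
    rpos S p = rpos S q ∧ lpos S p = lpos S q := by
  obtain ⟨hrS, _⟩ := rpos_mem hne
  have hpr : p < rpos S q := h2
  have hnep : (rset S p).Nonempty := ⟨rpos S q, by simp [rset, Finset.mem_filter, hrS, hpr]⟩
  constructor
  · obtain ⟨hrS', hpr'⟩ := rpos_mem hnep
    have hle : rpos S p ≤ rpos S q := rpos_min hnep hrS hpr
    rcases eq_or_lt_of_le hle with heq | hlt
    · exact heq
    · exfalso
      have hb1 : lpos S q ≤ (rpos S p : ℕ) := by
        have : (p : ℕ) < (rpos S p : ℕ) := hpr'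
        omega
      exact not_mem_block hq hb1 hlt hrS'
  · by_cases hl : (lset S q).Nonempty
    · set m := (lset S q).max' hl with hm
      have hmem : m ∈ lset S q := Finset.max'_mem _ hl
      simp only [lset, Finset.mem_filter] at hmem
      have hlq : lpos S q = (m : ℕ) + 1 := by unfold lpos; rw [dif_pos hl]
      have hmp : m < p := by
        have : (m : ℕ) < (p : ℕ) := by omega
        exact this
      have hnel : (lset S p).Nonempty := ⟨m, by simp [lset, Finset.mem_filter, hmem.1, hmp]⟩
      set m2 := (lset S p).max' hnel with hm2
      have hmem2 : m2 ∈ lset S p := Finset.max'_mem _ hnel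
      simp only [lset, Finset.mem_filter] at hmem2
      have hle : m ≤ m2 := Finset.le_max' _ _ (by simp [lset, Finset.mem_filter, hmem.1, hmp])
      have heq : m2 = m := by
        rcases eq_or_lt_of_le hle with h | h
        · exact h.symm
        · exfalso
          have hb1 : lpos S q ≤ (m2 : ℕ) := by
            have : (m : ℕ) < (m2 : ℕ) := h
            omega
          have hb2 : (m2 : ℕ) < (rpos S q : ℕ) := by
            have : (m2 : ℕ) < (p : ℕ) := hmem2.2
            omega
          exact not_mem_block hq hb1 hb2 hmem2.1
      unfold lpos; rw [dif_pos hnel, dif_pos hl, ← hm, ← hm2, heq]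
    · have hle : lset S p = ∅ := by
        rw [Finset.eq_empty_iff_forall_notMem]
        intro x hx
        simp only [lset, Finset.mem_filter] at hx
        rcases lt_trichotomy x q with h | h | h
        · exact hl ⟨x, by simp [lset, Finset.mem_filter, hx.1, h]⟩
        · exact hq (h ▸ hx.1)
        · have := rpos_min hne hx.1 h
          have h3 : (rpos S q : ℕ) ≤ (x : ℕ) := this
          have h4 : (x : ℕ) < (p : ℕ) := hx.2
          omega
      unfold lpos
      rw [dif_neg hl, dif_neg (by rw [hle]; exact Finset.not_nonempty_empty)]

def mir (S : Finset (Fin n)) (q : Fin n) : Fin n :=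
  ⟨lpos S q + ((rpos S q : ℕ) - 1 - (q : ℕ)), by
    have h1 := lpos_le S q
    have h2 := (rpos S q).isLt
    have h3 := q.isLt
    omega⟩

def sig (S : Finset (Fin n)) (q : Fin n) : Fin n := if q ∈ S then q else mir S q

lemma sig_mem {S : Finset (Fin n)} {q : Fin n} (h : q ∈ S) : sig S q = q := if_pos h

lemma sig_not_mem {S : Finset (Fin n)} {q : Fin n} (h : q ∉ S) : sig S q = mir S q := if_neg h

lemma mir_facts {S : Finset (Fin n)} {q : Fin n} (hq : q ∉ S) (hne : (rset S q).Nonempty) :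
    lpos S q ≤ (mir S q : ℕ) ∧ (mir S q : ℕ) < (rpos S q : ℕ) ∧ mir S q ∉ S := by
  have hqr : (q : ℕ) < (rpos S q : ℕ) := (rpos_mem hne).2
  have hl := lpos_le S q
  have h1 : lpos S q ≤ (mir S q : ℕ) := by simp [mir]
  have h2 : (mir S q : ℕ) < (rpos S q : ℕ) := by simp only [mir]; omega
  exact ⟨h1, h2, not_mem_block hq h1 h2⟩

lemma sig_sig {S : Finset (Fin n)} (HS : ∀ q : Fin n, q ∉ S → (rset S q).Nonempty)
    (q : Fin n) : sig S (sig S q) = q := by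
  by_cases h : q ∈ S
  · rw [sig_mem h, sig_mem h]
  · have hne := HS q h
    obtain ⟨h1, h2, h3⟩ := mir_facts h hne
    rw [sig_not_mem h, sig_not_mem h3]
    obtain ⟨hr, hl⟩ := block_eq h hne h1 h2
    have hqr : (q : ℕ) < (rpos S q : ℕ) := (rpos_mem hne).2
    have hlq := lpos_le S q
    apply Fin.ext
    show lpos S (mir S q) + ((rpos S (mir S q) : ℕ) - 1 - (mir S q : ℕ)) = (q : ℕ)
    rw [hr, hl]
    have hm : (mir S q : ℕ) = lpos S q + ((rpos S q : ℕ) - 1 - (q : ℕ)) := rfl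
    omega

lemma exists_wmax_gt {w : Fin n → Fin k} {q : Fin n} (hq : q ∉ Wset w) :
    (rset (Wset w) q).Nonempty := by
  rw [mem_Wset] at hq
  push_neg at hq
  obtain ⟨j, hj, hwj⟩ := hq
  have hT : (Finset.univ.filter (fun x : Fin n => q < x)).Nonempty :=
    ⟨j, by simp [hj]⟩
  obtain ⟨j0, hj0, hmax⟩ := Finset.exists_max_image _ w hT
  simp only [Finset.mem_filter, Finset.mem_univ, true_and] at hj0
  have hj0W : j0 ∈ Wset w := by
    rw [mem_Wset]
    intro l hl
    exact hmax l (by simp [lt_trans hj0 hl])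
  exact ⟨j0, by simp [rset, Finset.mem_filter, hj0W, hj0]⟩

lemma lt_w_rpos {w : Fin n → Fin k} {q : Fin n} (hq : q ∉ Wset w) :
    w q < w (rpos (Wset w) q) := by
  have hne := exists_wmax_gt hq
  rw [mem_Wset] at hq
  push_neg at hq
  obtain ⟨j, hj, hwj⟩ := hq
  have hT : (Finset.univ.filter (fun x : Fin n => q < x)).Nonempty :=
    ⟨j, by simp [hj]⟩
  obtain ⟨j0, hj0, hmax⟩ := Finset.exists_max_image _ w hT
  simp only [Finset.mem_filter, Finset.mem_univ, true_and] at hj0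
  have hj0W : j0 ∈ Wset w := by
    rw [mem_Wset]
    intro l hl
    exact hmax l (by simp [lt_trans hj0 hl])
  obtain ⟨hrW, hqr⟩ := rpos_mem hne
  have hle : rpos (Wset w) q ≤ j0 := rpos_min hne hj0W hj0
  have hwj0 : w j0 ≤ w (rpos (Wset w) q) := by
    rcases eq_or_lt_of_le hle with h | h
    · rw [h]
    · exact (mem_Wset.1 hrW) j0 h
  calc w q < w j := hwj
    _ ≤ w j0 := hmax j (by simp [hj])
    _ ≤ w (rpos (Wset w) q) := hwj0

def Phi (w : Fin n → Fin k) : Fin n → Fin k := fun q => w (sig (Wset w) q)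

lemma Wset_Phi (w : Fin n → Fin k) : Wset (Phi w) = Wset w := by
  ext p
  constructor
  · intro hp
    by_contra hpn
    have hne := exists_wmax_gt hpn
    obtain ⟨hrW, hqr⟩ := rpos_mem hne
    have h1 : Phi w (rpos (Wset w) p) ≤ Phi w p := (mem_Wset.1 hp) _ hqr
    have h2 : Phi w (rpos (Wset w) p) = w (rpos (Wset w) p) := by
      unfold Phi; rw [sig_mem hrW]
    have h3 : Phi w p = w (mir (Wset w) p) := by
      unfold Phi; rw [sig_not_mem hpn]
    obtain ⟨hb1, hb2, hb3⟩ := mir_facts hpn hne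
    obtain ⟨hreq, _⟩ := block_eq hpn hne hb1 hb2
    have h4 : w (mir (Wset w) p) < w (rpos (Wset w) (mir (Wset w) p)) := lt_w_rpos hb3
    rw [hreq] at h4
    rw [h2, h3] at h1
    exact absurd (lt_of_le_of_lt h1 h4) (lt_irrefl _)
  · intro hp
    rw [mem_Wset]
    intro j hpj
    have hPp : Phi w p = w p := by unfold Phi; rw [sig_mem hp]
    rw [hPp]
    by_cases hjS : j ∈ Wset w
    · have : Phi w j = w j := by unfold Phi; rw [sig_mem hjS]
      rw [this]
      exact (mem_Wset.1 hp) j hpj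
    · have hne := exists_wmax_gt hjS
      have : Phi w j = w (mir (Wset w) j) := by unfold Phi; rw [sig_not_mem hjS]
      rw [this]
      have hpl : (p : ℕ) < lpos (Wset w) j := by
        by_contra hc
        push_neg at hc
        have hjr : (j : ℕ) < (rpos (Wset w) j : ℕ) := (rpos_mem hne).2
        have hpj' : (p : ℕ) < (j : ℕ) := hpj
        exact not_mem_block hjS hc (by omega) hp
      obtain ⟨hb1, _, _⟩ := mir_facts hjS hne
      have : p < mir (Wset w) j := by
        have : (p : ℕ) < (mir (Wset w) j : ℕ) := by omega
        exact this
      exact (mem_Wset.1 hp) _ this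

lemma Phi_Phi (w : Fin n → Fin k) : Phi (Phi w) = w := by
  funext q
  show Phi w (sig (Wset (Phi w)) q) = w q
  rw [Wset_Phi]
  show w (sig (Wset w) (sig (Wset w) q)) = w q
  rw [sig_sig (fun q hq => exists_wmax_gt hq)]


lemma letter_lt_letter {w : Fin n → Fin k} {a b : ℕ} (ha : a < n) (hb : b < n) :
    letter w a < letter w b ↔ w ⟨a, ha⟩ < w ⟨b, hb⟩ := by
  simp only [letter, dif_pos ha, dif_pos hb, Fin.lt_def]
  omega

def P12 (w : Fin n → Fin k) : Prop :=
  ∀ (i : ℕ) (h1 : i + 1 < n),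
    (⟨i, Nat.lt_of_succ_lt h1⟩ : Fin n) ∉ Wset w → (⟨i + 1, h1⟩ : Fin n) ∉ Wset w →
    w ⟨i + 1, h1⟩ ≤ w ⟨i, Nat.lt_of_succ_lt h1⟩

def P21 (w : Fin n → Fin k) : Prop :=
  ∀ (i : ℕ) (h1 : i + 1 < n),
    (⟨i, Nat.lt_of_succ_lt h1⟩ : Fin n) ∉ Wset w → (⟨i + 1, h1⟩ : Fin n) ∉ Wset w →
    w ⟨i, Nat.lt_of_succ_lt h1⟩ ≤ w ⟨i + 1, h1⟩

lemma avoids12_iff_P12 (w : Fin n → Fin k) : Avoids12d3 w ↔ P12 w := by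
  constructor
  · intro hA i h1 _ hi1
    rw [mem_Wset] at hi1
    push_neg at hi1
    obtain ⟨j, hj, hwj⟩ := hi1
    have hj2 : i + 2 ≤ (j : ℕ) := hj
    have := hA i j.1 hj2 j.isLt
    by_contra hcon
    rw [not_le] at hcon
    apply this
    constructor
    · rw [letter_lt_letter (Nat.lt_of_succ_lt h1) h1]; exact hcon
    · rw [letter_lt_letter h1 j.isLt]; exact hwj
  · intro hP i j hij hjn hcon
    obtain ⟨c1, c2⟩ := hcon
    have h1 : i + 1 < n := by omega
    have hi : i < n := by omega
    rw [letter_lt_letter hi h1] at c1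
    rw [letter_lt_letter h1 hjn] at c2
    have hiW : (⟨i, hi⟩ : Fin n) ∉ Wset w := by
      rw [mem_Wset]; push_neg
      exact ⟨⟨i + 1, h1⟩, by simp [Fin.lt_def], c1⟩
    have hi1W : (⟨i + 1, h1⟩ : Fin n) ∉ Wset w := by
      rw [mem_Wset]; push_neg
      exact ⟨⟨j, hjn⟩, by simp [Fin.lt_def]; omega, c2⟩
    exact absurd (hP i h1 hiW hi1W) (not_le.2 c1)

lemma avoids21_iff_P21 (w : Fin n → Fin k) : Avoids21d3 w ↔ P21 w := by
  constructor
  · intro hA i h1 hi _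
    rw [mem_Wset] at hi
    push_neg at hi
    obtain ⟨j, hj, hwj⟩ := hi
    by_cases hj2 : i + 2 ≤ (j : ℕ)
    · have := hA i j.1 hj2 j.isLt
      by_contra hcon
      rw [not_le] at hcon
      apply this
      constructor
      · rw [letter_lt_letter h1 (Nat.lt_of_succ_lt h1)]; exact hcon
      · rw [letter_lt_letter (Nat.lt_of_succ_lt h1) j.isLt]; exact hwj
    · have hji : (i : ℕ) < (j : ℕ) := hj
      have : j = ⟨i + 1, h1⟩ := Fin.ext (by show (j : ℕ) = i + 1; omega)
      rw [this] at hwj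
      exact le_of_lt hwj
  · intro hP i j hij hjn hcon
    obtain ⟨c1, c2⟩ := hcon
    have h1 : i + 1 < n := by omega
    have hi : i < n := by omega
    rw [letter_lt_letter h1 hi] at c1
    rw [letter_lt_letter hi hjn] at c2
    have hiW : (⟨i, hi⟩ : Fin n) ∉ Wset w := by
      rw [mem_Wset]; push_neg
      exact ⟨⟨j, hjn⟩, by simp [Fin.lt_def]; omega, c2⟩
    have hi1W : (⟨i + 1, h1⟩ : Fin n) ∉ Wset w := by
      rw [mem_Wset]; push_neg
      refine ⟨⟨j, hjn⟩, by simp [Fin.lt_def]; omega, lt_trans c1 c2⟩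
    exact absurd (hP i h1 hiW hi1W) (not_le.2 c1)

lemma adj_mirror {S : Finset (Fin n)} (HS : ∀ q : Fin n, q ∉ S → (rset S q).Nonempty)
    {i : ℕ} (h1 : i + 1 < n)
    (hi : (⟨i, Nat.lt_of_succ_lt h1⟩ : Fin n) ∉ S) (hi1 : (⟨i + 1, h1⟩ : Fin n) ∉ S) :
    ∃ (a : ℕ) (ha : a + 1 < n),
      (⟨a, Nat.lt_of_succ_lt ha⟩ : Fin n) ∉ S ∧ (⟨a + 1, ha⟩ : Fin n) ∉ S ∧
      sig S ⟨i, Nat.lt_of_succ_lt h1⟩ = ⟨a + 1, ha⟩ ∧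
      sig S ⟨i + 1, h1⟩ = ⟨a, Nat.lt_of_succ_lt ha⟩ := by
  set q : Fin n := ⟨i, Nat.lt_of_succ_lt h1⟩ with hqdef
  set q1 : Fin n := ⟨i + 1, h1⟩ with hq1def
  have hne := HS q hi
  obtain ⟨hrS, hqr⟩ := rpos_mem hne
  have hl := lpos_le S q
  have hlv : lpos S q ≤ i := hl
  have hqrv : i < (rpos S q : ℕ) := hqr
  have hne2 : i + 1 ≠ (rpos S q : ℕ) := by
    intro h
    apply hi1
    have : q1 = rpos S q := Fin.ext h
    rw [this]; exact hrS
  have hq1r : i + 1 < (rpos S q : ℕ) := by omega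
  obtain ⟨hreq, hleq⟩ := block_eq hi hne (p := q1) (by show lpos S q ≤ i + 1; omega) hq1r
  set r : ℕ := (rpos S q : ℕ) with hrdef
  set l : ℕ := lpos S q with hldef
  set a : ℕ := l + (r - 1 - (i + 1)) with hadef
  have hmirq : (mir S q : ℕ) = l + (r - 1 - i) := rfl
  have hmirq1 : (mir S q1 : ℕ) = l + (r - 1 - (i + 1)) := by
    show lpos S q1 + ((rpos S q1 : ℕ) - 1 - (i + 1)) = l + (r - 1 - (i + 1))
    rw [hreq, hleq]
  have ha1 : a + 1 = l + (r - 1 - i) := by omega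
  have har : a + 1 ≤ r - 1 := by omega
  have ha : a + 1 < n := by
    have := (rpos S q).isLt
    omega
  have hrn : r < n := by rw [hrdef]; exact (rpos S q).isLt
  refine ⟨a, ha, ?_, ?_, ?_, ?_⟩
  · exact not_mem_block hi (by show l ≤ a; omega) (by show a < r; omega)
  · exact not_mem_block hi (by show l ≤ a + 1; omega) (by show a + 1 < r; omega)
  · rw [sig_not_mem hi]
    exact Fin.ext (by show (mir S q : ℕ) = a + 1; rw [hmirq]; omega)
  · rw [sig_not_mem hi1]
    exact Fin.ext (by rw [hmirq1])

lemma P12_iff_P21_Phi (w : Fin n → Fin k) : P12 w ↔ P21 (Phi w) := by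
  constructor
  · intro hP i h1 hi hi1
    rw [Wset_Phi] at hi hi1
    obtain ⟨a, ha, haS, ha1S, e1, e2⟩ := adj_mirror (fun q hq => exists_wmax_gt hq) h1 hi hi1
    show w (sig (Wset w) ⟨i, Nat.lt_of_succ_lt h1⟩) ≤ w (sig (Wset w) ⟨i + 1, h1⟩)
    rw [e1, e2]
    exact hP a ha haS ha1S
  · intro hP i h1 hi hi1
    obtain ⟨a, ha, haS, ha1S, e1, e2⟩ := adj_mirror (fun q hq => exists_wmax_gt hq) h1 hi hi1
    have h := hP a ha (by rw [Wset_Phi]; exact haS) (by rw [Wset_Phi]; exact ha1S)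
    have s1 : sig (Wset w) ⟨a, Nat.lt_of_succ_lt ha⟩ = ⟨i + 1, h1⟩ := by
      rw [← e2, sig_sig (fun q hq => exists_wmax_gt hq)]
    have s2 : sig (Wset w) ⟨a + 1, ha⟩ = ⟨i, Nat.lt_of_succ_lt h1⟩ := by
      rw [← e1, sig_sig (fun q hq => exists_wmax_gt hq)]
    have h' : w (sig (Wset w) ⟨a, Nat.lt_of_succ_lt ha⟩) ≤ w (sig (Wset w) ⟨a + 1, ha⟩) := h
    rw [s1, s2] at h'
    exact h'

lemma avoids_iff (w : Fin n → Fin k) : Avoids12d3 w ↔ Avoids21d3 (Phi w) :=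
  (avoids12_iff_P12 w).trans ((P12_iff_P21_Phi w).trans (avoids21_iff_P21 (Phi w)).symm)

end Wilf

theorem stmt9 (n k : ℕ) :
    Nat.card {w : Fin n → Fin k // Avoids12d3 w} =
      Nat.card {w : Fin n → Fin k // Avoids21d3 w} := by
  apply Nat.card_congr
  exact
    { toFun := fun x => ⟨Wilf.Phi x.1, (Wilf.avoids_iff x.1).1 x.2⟩
      invFun := fun y => ⟨Wilf.Phi y.1, by
        have h := Wilf.avoids_iff (Wilf.Phi y.1)
        rw [Wilf.Phi_Phi] at h
        exact h.2 y.2⟩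
      left_inv := fun x => Subtype.ext (Wilf.Phi_Phi x.1)
      right_inv := fun y => Subtype.ext (Wilf.Phi_Phi y.1) }
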